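/- Let H(s) = C(sE − A)⁻¹B + D and let H_r(s) = C_r(sE_r − A_r)⁻¹B_r + D be the Petrov-Galerkin reduced model with E_r = WᵀEV, A_r = WᵀAV, B_r = WᵀB, C_r = CV. Let σ ∈ ℂ with σE − A and σE_r − A_r invertible, and let r ∈ ℂᵐ, ℓ ∈ ℂᵖ be nonzero. If (σE − A)⁻¹Br ∈ Ran(V) and (σE − A)⁻ᵀCᵀℓ ∈ Ran(W), then ℓᵀH'(σ)r = ℓᵀH_r'(σ)r, where H'(s) = −C(sE − A)⁻¹E(sE − A)⁻¹B is the derivative of H with respect to s. -/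
import Mathlib


open Matrix
open scoped Matrix

/-- Bitangential Hermite interpolation by two-sided Petrov-Galerkin projection:
if both tangential subspace conditions hold at `σ`, then the derivatives of the
full and reduced transfer functions agree bitangentially:
`ℓᵀ H'(σ) r = ℓᵀ H_r'(σ) r`, where `H'(s) = -C (sE-A)⁻¹ E (sE-A)⁻¹ B`. -/
theorem bitangential_hermite_interpolation
    {n m p r : ℕ}
    (E A : Matrix (Fin n) (Fin n) ℂ) (B : Matrix (Fin n) (Fin m) ℂ)
    (C : Matrix (Fin p) (Fin n) ℂ) (D : Matrix (Fin p) (Fin m) ℂ)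
    (V W : Matrix (Fin n) (Fin r) ℂ)
    (σ : ℂ)
    (hσ : IsUnit (σ • E - A).det)
    (hσr : IsUnit (σ • (Wᵀ * E * V) - Wᵀ * A * V).det)
    (rdir : Fin m → ℂ) (hrdir : rdir ≠ 0)
    (ldir : Fin p → ℂ) (hldir : ldir ≠ 0)
    (hranV : ∃ c : Fin r → ℂ, V *ᵥ c = (σ • E - A)⁻¹ *ᵥ (B *ᵥ rdir))
    (hranW : ∃ c : Fin r → ℂ, W *ᵥ c = ((σ • E - A)ᵀ)⁻¹ *ᵥ (Cᵀ *ᵥ ldir)) :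
    ldir ⬝ᵥ ((-(C * (σ • E - A)⁻¹ * E * (σ • E - A)⁻¹ * B)) *ᵥ rdir)
      = ldir ⬝ᵥ ((-((C * V) * (σ • (Wᵀ * E * V) - Wᵀ * A * V)⁻¹ * (Wᵀ * E * V) *
            (σ • (Wᵀ * E * V) - Wᵀ * A * V)⁻¹ * (Wᵀ * B))) *ᵥ rdir) := by
  obtain ⟨c, hc⟩ := hranV
  obtain ⟨d, hd⟩ := hranW
  set K := σ • E - A with hK
  set Kr := σ • (Wᵀ * E * V) - Wᵀ * A * V with hKr
  have hσt : IsUnit Kᵀ.det := by rwa [Matrix.det_transpose]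
  have hσrt : IsUnit Krᵀ.det := by rwa [Matrix.det_transpose]
  have hKrfac : Kr = Wᵀ * K * V := by
    simp [hKr, hK, Matrix.mul_sub, Matrix.sub_mul, Matrix.mul_smul, Matrix.smul_mul]
  have hKrTfac : Krᵀ = Vᵀ * Kᵀ * W := by
    rw [hKrfac]; simp [Matrix.transpose_mul, Matrix.mul_assoc]
  -- c is recovered from the reduced system
  have hc2 : Kr *ᵥ c = Wᵀ *ᵥ (B *ᵥ rdir) := by
    rw [hKrfac, Matrix.mul_assoc, ← Matrix.mulVec_mulVec, ← Matrix.mulVec_mulVec, hc,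
      Matrix.mulVec_mulVec _ K K⁻¹, Matrix.mul_nonsing_inv K hσ, Matrix.one_mulVec]
  have hcval : Kr⁻¹ *ᵥ (Wᵀ *ᵥ (B *ᵥ rdir)) = c := by
    rw [← hc2, Matrix.mulVec_mulVec, Matrix.nonsing_inv_mul Kr hσr, Matrix.one_mulVec]
  -- d is recovered from the reduced system
  have hd2 : Krᵀ *ᵥ d = Vᵀ *ᵥ (Cᵀ *ᵥ ldir) := by
    rw [hKrTfac, Matrix.mul_assoc, ← Matrix.mulVec_mulVec, ← Matrix.mulVec_mulVec, hd,
      Matrix.mulVec_mulVec _ Kᵀ Kᵀ⁻¹, Matrix.mul_nonsing_inv Kᵀ hσt, Matrix.one_mulVec]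
  have hdval : (Krᵀ)⁻¹ *ᵥ (Vᵀ *ᵥ (Cᵀ *ᵥ ldir)) = d := by
    rw [← hd2, Matrix.mulVec_mulVec, Matrix.nonsing_inv_mul Krᵀ hσrt, Matrix.one_mulVec]
  simp only [Matrix.neg_mulVec, dotProduct_neg, neg_inj]
  -- LHS reduction
  have hL : ldir ⬝ᵥ ((C * K⁻¹ * E * K⁻¹ * B) *ᵥ rdir)
      = (W *ᵥ d) ⬝ᵥ (E *ᵥ (V *ᵥ c)) := by
    have h1 : (C * K⁻¹ * E * K⁻¹ * B) *ᵥ rdir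
        = (C * K⁻¹) *ᵥ (E *ᵥ (V *ᵥ c)) := by
      rw [hc, Matrix.mulVec_mulVec, Matrix.mulVec_mulVec, Matrix.mulVec_mulVec,
        Matrix.mul_assoc, Matrix.mul_assoc, Matrix.mul_assoc]
    rw [h1, Matrix.dotProduct_mulVec, ← Matrix.mulVec_transpose, Matrix.transpose_mul,
      Matrix.transpose_nonsing_inv, ← Matrix.mulVec_mulVec, ← hd]
  -- RHS reduction
  have hR : ldir ⬝ᵥ ((C * V * Kr⁻¹ * (Wᵀ * E * V) * Kr⁻¹ * (Wᵀ * B)) *ᵥ rdir)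
      = (W *ᵥ d) ⬝ᵥ (E *ᵥ (V *ᵥ c)) := by
    have h1 : (C * V * Kr⁻¹ * (Wᵀ * E * V) * Kr⁻¹ * (Wᵀ * B)) *ᵥ rdir
        = (C * V * Kr⁻¹ * Wᵀ) *ᵥ (E *ᵥ (V *ᵥ c)) := by
      have : (Kr⁻¹ * (Wᵀ * B)) *ᵥ rdir = c := by
        rw [← Matrix.mulVec_mulVec, ← Matrix.mulVec_mulVec, hcval]
      calc (C * V * Kr⁻¹ * (Wᵀ * E * V) * Kr⁻¹ * (Wᵀ * B)) *ᵥ rdir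
          = (C * V * Kr⁻¹ * (Wᵀ * E * V)) *ᵥ ((Kr⁻¹ * (Wᵀ * B)) *ᵥ rdir) := by
            rw [Matrix.mulVec_mulVec, Matrix.mul_assoc, Matrix.mul_assoc]
        _ = (C * V * Kr⁻¹ * Wᵀ) *ᵥ (E *ᵥ (V *ᵥ c)) := by
            rw [this, Matrix.mulVec_mulVec, Matrix.mulVec_mulVec,
              Matrix.mul_assoc (C * V * Kr⁻¹) Wᵀ, Matrix.mul_assoc (C * V * Kr⁻¹),
              Matrix.mul_assoc, Matrix.mul_assoc]
    rw [h1, Matrix.dotProduct_mulVec, ← Matrix.mulVec_transpose]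
    congr 1
    rw [← hdval]
    simp [Matrix.transpose_mul, Matrix.transpose_nonsing_inv, Matrix.mulVec_mulVec,
      Matrix.mul_assoc]
  rw [hL, hR]
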